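/- arXiv:2304.04872 — 2 statements merged into one kernel-verified Lean document; each statement's English description precedes it below -/
import Mathlib

section
/- Let R be a commutative ring. Let Spec_k(fgId(R)) denote the set of prime subtractive ideals of the semiring fgId(R), and for X ⊆ fgId(R) let V_k(X) = {p ∈ Spec_k(fgId(R)) : X ⊆ p}. Then the family {V_k(X) : X ⊆ fgId(R)} is the family of closed sets of a topology on Spec_k(fgId(R)) (it contains the empty set and the whole space and is closed under finite unions and arbitrary intersections), and the map Spec(R) → Spec_k(fgId(R)), p ↦ ⟨u_R(p)⟩_k, is a homeomorphism, where Spec(R) carries the Zariski topology. -/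
/-- The type of finitely generated ideals of a commutative ring `R`. -/
def FGIdeal (R : Type*) [CommRing R] : Type _ := {I : Ideal R // I.FG}

namespace FGIdeal

variable {R : Type*} [CommRing R]

instance : Zero (FGIdeal R) := ⟨⟨⊥, Submodule.fg_bot⟩⟩

instance : One (FGIdeal R) := ⟨⟨1, ⟨{1}, by simp [Ideal.one_eq_top]⟩⟩⟩

instance : Add (FGIdeal R) :=
  ⟨fun I J => ⟨I.1 + J.1, by rw [Submodule.add_eq_sup]; exact Submodule.FG.sup I.2 J.2⟩⟩

instance : Mul (FGIdeal R) := ⟨fun I J => ⟨I.1 * J.1, Submodule.FG.mul I.2 J.2⟩⟩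

instance : SMul ℕ (FGIdeal R) :=
  ⟨fun n I => ⟨n • I.1, by
    induction n with
    | zero => show Submodule.FG _; simpa using Submodule.fg_bot
    | succ n ih => rw [succ_nsmul, Submodule.add_eq_sup]; exact Submodule.FG.sup ih I.2⟩⟩

instance : Pow (FGIdeal R) ℕ := ⟨fun I n => ⟨I.1 ^ n, Submodule.FG.pow I.2 n⟩⟩

instance : NatCast (FGIdeal R) :=
  ⟨fun n => ⟨(n : Ideal R), by
    induction n with
    | zero => show Submodule.FG _; simpa using Submodule.fg_bot
    | succ n ih =>
        rw [Nat.cast_succ, Submodule.add_eq_sup]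
        exact Submodule.FG.sup ih ⟨{1}, by simp [Ideal.one_eq_top]⟩⟩⟩

instance : CommSemiring (FGIdeal R) :=
  Subtype.val_injective.commSemiring (fun I : FGIdeal R => I.1) rfl rfl
    (fun _ _ => rfl) (fun _ _ => rfl) (fun _ _ => rfl) (fun _ _ => rfl) (fun _ => rfl)

end FGIdeal

variable {R : Type*} [CommRing R]

/-- The universal integral seminorm `u_R : R → fgId(R)`, `a ↦ R·a`. -/
def uRfg (a : R) : FGIdeal R := ⟨Ideal.span {a}, Submodule.fg_span_singleton a⟩
section SemiringIdeals

variable {S : Type*} [CommSemiring S]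

/-- A subset of a commutative semiring which is an ideal: it contains `0` and is closed
under addition and under multiplication by arbitrary elements. -/
def IsIdealSet (I : Set S) : Prop :=
  (0 : S) ∈ I ∧ (∀ a ∈ I, ∀ b ∈ I, a + b ∈ I) ∧ ∀ (c : S), ∀ a ∈ I, c * a ∈ I

/-- A subset `I` is subtractive if `a + b ∈ I` and `a ∈ I` imply `b ∈ I`. -/
def IsSubtractiveSet (I : Set S) : Prop :=
  ∀ a b : S, a + b ∈ I → a ∈ I → b ∈ I

/-- A `k`-ideal (subtractive ideal) of a commutative semiring. -/
def IsKIdeal (I : Set S) : Prop := IsIdealSet I ∧ IsSubtractiveSet I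

/-- The smallest subtractive ideal containing a subset `X`. -/
def kClosure (X : Set S) : Set S := ⋂₀ {J : Set S | IsKIdeal J ∧ X ⊆ J}

/-- The smallest ideal containing a subset `X`. -/
def idealGen (X : Set S) : Set S := ⋂₀ {J : Set S | IsIdealSet J ∧ X ⊆ J}

/-- An ideal of a commutative semiring is prime when its complement is multiplicatively
closed: `1 ∉ I` and `a * b ∈ I` implies `a ∈ I` or `b ∈ I`. -/
def IsPrimeSet (I : Set S) : Prop :=
  (1 : S) ∉ I ∧ ∀ a b : S, a * b ∈ I → a ∈ I ∨ b ∈ I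

end SemiringIdeals

/-- The map `Id(R) → Id_k(fgId(R))`, `I ↦ ⟨u_R(I)⟩_k`. -/
def uRtilde {R : Type*} [CommRing R] (I : Ideal R) : Set (FGIdeal R) :=
  kClosure (uRfg '' (I : Set R))

/-- `Spec_k(fgId(R))`: the set of prime subtractive ideals of the semiring `fgId(R)`. -/
def SpecK (R : Type*) [CommRing R] : Type _ :=
  {p : Set (FGIdeal R) // IsKIdeal p ∧ IsPrimeSet p}

/-- The Zariski closed sets `V_k(X) = {p ∈ Spec_k(fgId(R)) : X ⊆ p}`. -/
def Vk {R : Type*} [CommRing R] (X : Set (FGIdeal R)) : Set (SpecK R) :=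
  {p : SpecK R | X ⊆ p.1}

/-- The Zariski topology on `Spec_k(fgId(R))`, generated by the complements of the sets
`V_k(X)`. -/
instance SpecK.instTopologicalSpace (R : Type*) [CommRing R] : TopologicalSpace (SpecK R) :=
  TopologicalSpace.generateFrom {U : Set (SpecK R) | ∃ X : Set (FGIdeal R), U = (Vk X)ᶜ}
namespace SpecKAux

variable {R : Type*} [CommRing R]

lemma val_add (I J : FGIdeal R) : (I + J).1 = I.1 ⊔ J.1 := by
  show I.1 + J.1 = I.1 ⊔ J.1
  exact Submodule.add_eq_sup I.1 J.1

lemma val_mul (I J : FGIdeal R) : (I * J).1 = I.1 * J.1 := rfl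

lemma val_zero : ((0 : FGIdeal R)).1 = ⊥ := rfl

lemma val_one : ((1 : FGIdeal R)).1 = ⊤ := Ideal.one_eq_top

/-- The set of fg ideals contained in a fixed ideal `I`. -/
def vset (I : Ideal R) : Set (FGIdeal R) := {J : FGIdeal R | J.1 ≤ I}

lemma isKIdeal_vset (I : Ideal R) : IsKIdeal (vset I) := by
  refine ⟨⟨?_, ?_, ?_⟩, ?_⟩
  · show (0 : FGIdeal R).1 ≤ I
    exact bot_le
  · intro a ha b hb
    show (a + b).1 ≤ I
    rw [val_add]
    exact sup_le ha hb
  · intro c a ha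
    show (c * a).1 ≤ I
    exact le_trans (Ideal.mul_le_right) ha
  · intro a b hab _
    replace hab : (a + b).1 ≤ I := hab
    rw [val_add] at hab
    exact le_trans le_sup_right hab

lemma mem_of_le {K : Set (FGIdeal R)} (hK : IsIdealSet K) {I : Ideal R}
    (hI : uRfg '' (I : Set R) ⊆ K) {J : FGIdeal R} (hJ : J.1 ≤ I) : J ∈ K := by
  obtain ⟨s, hs⟩ := J.2
  have key : ∀ s : Finset R, (↑s : Set R) ⊆ (I : Set R) →
      ∀ J : FGIdeal R, J.1 = Ideal.span ↑s → J ∈ K := by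
    classical
    intro s
    induction s using Finset.induction_on with
    | empty =>
        intro _ J hJ
        have : J = 0 := Subtype.ext ((by simpa using hJ : J.1 = ⊥).trans val_zero.symm)
        exact this ▸ hK.1
    | @insert a s _ ih =>
        intro hsub J hJe
        have h1 : uRfg a ∈ K := hI ⟨a, hsub (Finset.mem_insert_self a s), rfl⟩
        have h2 : (⟨Ideal.span ↑s, (show Ideal.FG (Ideal.span (s : Set R)) from ⟨s, rfl⟩)⟩ : FGIdeal R) ∈ K :=
          ih (fun x hx => hsub (Finset.mem_insert_of_mem hx)) _ rfl
        have hEq : J = uRfg a + ⟨Ideal.span ↑s, (show Ideal.FG (Ideal.span (s : Set R)) from ⟨s, rfl⟩)⟩ :=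
          Subtype.ext (by
            rw [hJe, Finset.coe_insert, Ideal.span_insert]; rfl)
        rw [hEq]
        exact hK.2.1 _ h1 _ h2
  have hsub : (↑s : Set R) ⊆ (I : Set R) := fun x hx =>
    hJ (hs ▸ Ideal.subset_span hx)
  exact key s hsub J hs.symm

lemma uRtilde_eq (I : Ideal R) : uRtilde I = vset I := by
  apply le_antisymm
  · apply Set.sInter_subset_of_mem
    refine ⟨isKIdeal_vset I, ?_⟩
    rintro _ ⟨a, ha, rfl⟩
    exact (Ideal.span_singleton_le_iff_mem I).2 ha
  · intro J hJ K hK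
    exact mem_of_le hK.1.1 hK.2 hJ

lemma isPrimeSet_vset (p : Ideal R) [hp : p.IsPrime] : IsPrimeSet (vset p) := by
  constructor
  · intro h
    replace h : (1 : FGIdeal R).1 ≤ p := h
    rw [val_one, top_le_iff] at h
    exact hp.ne_top h
  · intro a b hab
    replace hab : (a * b).1 ≤ p := hab
    rw [val_mul] at hab
    exact hp.mul_le.1 hab

/-- The inverse map: from a prime `k`-ideal of `fgId(R)` to an ideal of `R`. -/
def invIdeal (P : SpecK R) : Ideal R where
  carrier := {a : R | uRfg a ∈ P.1}
  zero_mem' := by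
    have : uRfg (0 : R) = 0 := Subtype.ext (by simp [uRfg, val_zero])
    rw [Set.mem_setOf_eq, this]
    exact P.2.1.1.1
  add_mem' := by
    intro a b ha hb
    have hsum : uRfg a + uRfg b ∈ P.1 := P.2.1.1.2.1 _ ha _ hb
    have hle : Ideal.span {a + b} ≤ Ideal.span {a} ⊔ Ideal.span {b} := by
      rw [Ideal.span_singleton_le_iff_mem]
      exact Submodule.add_mem _ (Submodule.mem_sup_left (Ideal.subset_span rfl))
        (Submodule.mem_sup_right (Ideal.subset_span rfl))
    have hEq : (uRfg a + uRfg b) + uRfg (a + b) = uRfg a + uRfg b := by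
      apply Subtype.ext
      rw [val_add, val_add]
      exact sup_eq_left.2 hle
    exact P.2.1.2 _ _ (by rw [hEq]; exact hsum) hsum
  smul_mem' := by
    intro c a ha
    have : uRfg (c * a) = uRfg c * uRfg a :=
      Subtype.ext (Ideal.span_singleton_mul_span_singleton c a).symm
    rw [Set.mem_setOf_eq, smul_eq_mul, this]
    exact P.2.1.1.2.2 _ _ ha

lemma invIdeal_isPrime (P : SpecK R) : (invIdeal P).IsPrime := by
  constructor
  · intro h
    have h1 : (1 : R) ∈ invIdeal P := h ▸ Submodule.mem_top
    have : uRfg (1 : R) = 1 := Subtype.ext (by simp [uRfg, val_one, Ideal.one_eq_top])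
    exact P.2.2.1 (this ▸ h1)
  · intro x y hxy
    have : uRfg (x * y) = uRfg x * uRfg y :=
      Subtype.ext (Ideal.span_singleton_mul_span_singleton x y).symm
    have hxy' : uRfg x * uRfg y ∈ P.1 := this ▸ hxy
    exact P.2.2.2 _ _ hxy'

/-- The bijection `Spec R ≃ Spec_k(fgId(R))`. -/
def specKEquiv (R : Type*) [CommRing R] : PrimeSpectrum R ≃ SpecK R where
  toFun p := ⟨vset p.asIdeal, isKIdeal_vset _, isPrimeSet_vset _⟩
  invFun P := ⟨invIdeal P, invIdeal_isPrime P⟩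
  left_inv p := by
    ext a
    show uRfg a ∈ vset p.asIdeal ↔ a ∈ p.asIdeal
    exact Ideal.span_singleton_le_iff_mem _
  right_inv P := by
    apply Subtype.ext
    apply le_antisymm
    · intro J hJ
      exact mem_of_le P.2.1.1 (by rintro _ ⟨a, ha, rfl⟩; exact ha) hJ
    · intro J hJ
      intro a ha
      have hle : Ideal.span {a} ≤ J.1 := (Ideal.span_singleton_le_iff_mem _).2 ha
      have hEq : J + uRfg a = J := Subtype.ext (by rw [val_add]; exact sup_eq_left.2 hle)
      exact P.2.1.2 _ _ (by rw [hEq]; exact hJ) hJ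

lemma Vk_empty : Vk (∅ : Set (FGIdeal R)) = Set.univ := by
  ext p; simp [Vk]

lemma Vk_univ : Vk (Set.univ : Set (FGIdeal R)) = ∅ := by
  ext p
  simp only [Vk, Set.mem_setOf_eq, Set.univ_subset_iff, Set.mem_empty_iff_false, iff_false]
  intro h
  exact p.2.2.1 (h ▸ Set.mem_univ (1 : FGIdeal R))

lemma Vk_union (X Y : Set (FGIdeal R)) :
    Vk X ∪ Vk Y = Vk (Set.image2 (· * ·) X Y) := by
  ext p
  simp only [Set.mem_union, Vk, Set.mem_setOf_eq]
  constructor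
  · rintro (hX | hY)
    · rintro _ ⟨x, hx, y, hy, rfl⟩
      have : y * x ∈ p.1 := p.2.1.1.2.2 y x (hX hx)
      rwa [mul_comm] at this
    · rintro _ ⟨x, hx, y, hy, rfl⟩
      exact p.2.1.1.2.2 x y (hY hy)
  · intro h
    by_cases hX : X ⊆ p.1
    · exact Or.inl hX
    · right
      obtain ⟨x, hx, hxp⟩ := Set.not_subset.1 hX
      intro y hy
      rcases p.2.2.2 x y (h (Set.mem_image2_of_mem hx hy)) with h' | h'
      · exact absurd h' hxp
      · exact h'

lemma Vk_sInter (F : Set (Set (SpecK R))) (hF : ∀ A ∈ F, ∃ X : Set (FGIdeal R), A = Vk X) :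
    ⋂₀ F = Vk (⋃₀ {X : Set (FGIdeal R) | Vk X ∈ F}) := by
  ext p
  simp only [Set.mem_sInter, Vk, Set.mem_setOf_eq, Set.sUnion_subset_iff]
  constructor
  · intro h X hX
    exact h _ hX
  · intro h A hA
    obtain ⟨X, rfl⟩ := hF A hA
    exact h X hA

lemma isOpen_iff (U : Set (SpecK R)) : IsOpen U ↔ ∃ X : Set (FGIdeal R), U = (Vk X)ᶜ := by
  constructor
  · intro h
    induction h with
    | basic U hU => exact hU
    | univ => exact ⟨Set.univ, by rw [Vk_univ, Set.compl_empty]⟩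
    | inter U V _ _ ihU ihV =>
        obtain ⟨X, rfl⟩ := ihU
        obtain ⟨Y, rfl⟩ := ihV
        exact ⟨Set.image2 (· * ·) X Y, by rw [← Set.compl_union, Vk_union]⟩
    | sUnion S _ ih =>
        have : ∀ A ∈ compl '' S, ∃ X : Set (FGIdeal R), A = Vk X := by
          rintro _ ⟨U, hU, rfl⟩
          obtain ⟨X, rfl⟩ := ih U hU
          exact ⟨X, by rw [compl_compl]⟩
        refine ⟨⋃₀ {X : Set (FGIdeal R) | Vk X ∈ compl '' S}, ?_⟩
        rw [← Vk_sInter _ this, ← Set.compl_sUnion, compl_compl]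
  · rintro ⟨X, rfl⟩
    exact TopologicalSpace.GenerateOpen.basic _ ⟨X, rfl⟩

lemma isClosed_iff (A : Set (SpecK R)) : IsClosed A ↔ ∃ X : Set (FGIdeal R), A = Vk X := by
  rw [← isOpen_compl_iff, isOpen_iff]
  constructor
  · rintro ⟨X, hX⟩
    exact ⟨X, by rw [← compl_compl A, hX, compl_compl]⟩
  · rintro ⟨X, rfl⟩
    exact ⟨X, rfl⟩

lemma preimage_Vk (X : Set (FGIdeal R)) :
    (specKEquiv R) ⁻¹' (Vk X) = PrimeSpectrum.zeroLocus (⋃ J ∈ X, (J.1 : Set R)) := by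
  ext p
  simp only [Set.mem_preimage, Vk, Set.mem_setOf_eq, PrimeSpectrum.mem_zeroLocus,
    Set.iUnion_subset_iff]
  constructor
  · intro h J hJ
    exact h hJ
  · intro h J hJ
    exact h J hJ

lemma symm_preimage_zeroLocus (S : Set R) :
    (specKEquiv R).symm ⁻¹' (PrimeSpectrum.zeroLocus S) = Vk (uRfg '' S) := by
  ext P
  simp only [Set.mem_preimage, PrimeSpectrum.mem_zeroLocus, Vk, Set.mem_setOf_eq]
  constructor
  · rintro h _ ⟨a, ha, rfl⟩
    exact h ha
  · intro h a ha
    exact h ⟨a, ha, rfl⟩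

lemma continuous_specKEquiv : Continuous (specKEquiv R) := by
  rw [continuous_iff_isClosed]
  intro s hs
  obtain ⟨X, rfl⟩ := (isClosed_iff s).1 hs
  rw [preimage_Vk]
  exact PrimeSpectrum.isClosed_zeroLocus _

lemma continuous_specKEquiv_symm : Continuous (specKEquiv R).symm := by
  rw [continuous_iff_isClosed]
  intro s hs
  obtain ⟨S, rfl⟩ := (PrimeSpectrum.isClosed_iff_zeroLocus s).1 hs
  rw [symm_preimage_zeroLocus]
  exact (isClosed_iff _).2 ⟨_, rfl⟩

/-- The homeomorphism `Spec R ≃ₜ Spec_k(fgId(R))`. -/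
def specKHomeo (R : Type*) [CommRing R] : PrimeSpectrum R ≃ₜ SpecK R where
  toEquiv := specKEquiv R
  continuous_toFun := continuous_specKEquiv
  continuous_invFun := continuous_specKEquiv_symm

end SpecKAux


/-- The family `{V_k(X) : X ⊆ fgId(R)}` is the family of closed sets
of a topology on `Spec_k(fgId(R))`: it contains the empty set and the whole space, and
it is closed under finite unions and arbitrary intersections; moreover
`Spec(R) → Spec_k(fgId(R))`, `p ↦ ⟨u_R(p)⟩_k`, is a homeomorphism for the Zariski
topologies. -/
theorem speck_topology_and_homeomorph (R : Type*) [CommRing R] :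
    (Set.univ ∈ {A : Set (SpecK R) | ∃ X : Set (FGIdeal R), A = Vk X}) ∧
    (∅ ∈ {A : Set (SpecK R) | ∃ X : Set (FGIdeal R), A = Vk X}) ∧
    (∀ A B : Set (SpecK R), (∃ X, A = Vk X) → (∃ Y, B = Vk Y) →
      ∃ Z : Set (FGIdeal R), A ∪ B = Vk Z) ∧
    (∀ F : Set (Set (SpecK R)), (∀ A ∈ F, ∃ X : Set (FGIdeal R), A = Vk X) →
      ∃ Z : Set (FGIdeal R), ⋂₀ F = Vk Z) ∧
    (∀ A : Set (SpecK R), IsClosed A ↔ ∃ X : Set (FGIdeal R), A = Vk X) ∧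
    ∃ h : PrimeSpectrum R ≃ₜ SpecK R,
      ∀ p : PrimeSpectrum R, (h p).1 = uRtilde p.asIdeal := by
  refine ⟨⟨∅, SpecKAux.Vk_empty.symm⟩, ⟨Set.univ, SpecKAux.Vk_univ.symm⟩, ?_, ?_, ?_, ?_⟩
  · rintro A B ⟨X, rfl⟩ ⟨Y, rfl⟩
    exact ⟨_, SpecKAux.Vk_union X Y⟩
  · intro F hF
    exact ⟨_, SpecKAux.Vk_sInter F hF⟩
  · exact SpecKAux.isClosed_iff
  · refine ⟨SpecKAux.specKHomeo R, fun p => ?_⟩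
    rw [SpecKAux.uRtilde_eq]
    rfl
end

section
/- Let R be a commutative ring and let I be a subtractive ideal of the semiring fgId(R) with I ≠ fgId(R). Then the radical √I := {α ∈ fgId(R) : αⁿ ∈ I for some integer n ≥ 1} is a subtractive ideal of fgId(R) and equals the intersection of all prime subtractive ideals of fgId(R) containing I. Moreover, the bijection ũ : Id(R) → Id_k(fgId(R)), J ↦ ⟨u_R(J)⟩_k, preserves radicals: ũ(rad(J)) = √(ũ(J)) for every proper ideal J of R; in particular ũ maps radical ideals of R to radical subtractive ideals of fgId(R). -/
variable {R : Type*} [CommRing R]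

/-- The radical `√I = {a : aⁿ ∈ I for some n ≥ 1}` of an ideal of a commutative
semiring. -/
def sqrtK {S : Type*} [CommSemiring S] (I : Set S) : Set S :=
  {a : S | ∃ n : ℕ, 1 ≤ n ∧ a ^ n ∈ I}

namespace FGIdealAux

variable {R : Type*} [CommRing R]

lemma fg_add_val (a b : FGIdeal R) : (a + b).1 = a.1 ⊔ b.1 :=
  Submodule.add_eq_sup (p := a.1) (q := b.1)

/-- `S_J`: the fg ideals contained in `J`. -/
def SJ (J : Ideal R) : Set (FGIdeal R) := {α | α.1 ≤ J}

lemma isKIdeal_SJ (J : Ideal R) : IsKIdeal (SJ J) := by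
  refine ⟨⟨show (0 : FGIdeal R).1 ≤ J from bot_le, fun a ha b hb => ?_, fun c a ha => ?_⟩,
    fun a b hab ha => ?_⟩
  · show (a + b).1 ≤ J; rw [fg_add_val]; exact sup_le ha hb
  · exact le_trans Ideal.mul_le_right ha
  · exact le_trans (le_sup_right.trans (fg_add_val a b).ge) hab

lemma mem_of_le {I : Set (FGIdeal R)} (hI : IsKIdeal I) {α β : FGIdeal R}
    (hβ : β ∈ I) (h : α.1 ≤ β.1) : α ∈ I := by
  have heq : β + α = β := Subtype.ext (by rw [fg_add_val]; exact sup_eq_left.2 h)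
  exact hI.2 β α (by rw [heq]; exact hβ) hβ

lemma uRfg_mem {K : Set (FGIdeal R)} (hK : IsKIdeal K) {x : R} {β : FGIdeal R}
    (hβ : β ∈ K) (hx : x ∈ β.1) : uRfg x ∈ K :=
  mem_of_le hK hβ ((Ideal.span_singleton_le_iff_mem _).2 hx)

lemma exists_mem_span_le {K : Set (FGIdeal R)} (hK : IsKIdeal K) (s : Finset R) :
    (∀ x ∈ s, uRfg x ∈ K) → ∃ β ∈ K, Ideal.span (s : Set R) ≤ β.1 := by
  classical
  induction s using Finset.induction with
  | empty =>
    intro _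
    show ∃ β ∈ K, Ideal.span ((∅ : Finset R) : Set R) ≤ β.1
    exact ⟨0, hK.1.1, by simp⟩
  | @insert x s hx ih =>
    intro hs
    show ∃ β ∈ K, Ideal.span ((insert x s : Finset R) : Set R) ≤ β.1
    obtain ⟨β, hβ, hle⟩ := ih fun y hy => hs y (Finset.mem_insert_of_mem hy)
    refine ⟨uRfg x + β, hK.1.2.1 _ (hs x (Finset.mem_insert_self x s)) _ hβ, ?_⟩
    rw [Finset.coe_insert, Ideal.span_insert, fg_add_val]
    exact sup_le_sup le_rfl hle

def toIdeal (I : Set (FGIdeal R)) : Ideal R := sSup ((fun α : FGIdeal R => α.1) '' I)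

lemma mem_toIdeal {I : Set (FGIdeal R)} (hI : IsKIdeal I) {x : R} :
    x ∈ toIdeal I ↔ ∃ α ∈ I, x ∈ α.1 := by
  have hne : ((fun α : FGIdeal R => α.1) '' I).Nonempty := ⟨(0 : FGIdeal R).1, ⟨0, hI.1.1, rfl⟩⟩
  have hdir : DirectedOn (· ≤ ·) ((fun α : FGIdeal R => α.1) '' I) := by
    rintro _ ⟨α, hα, rfl⟩ _ ⟨β, hβ, rfl⟩
    refine ⟨(α + β).1, ⟨α + β, hI.1.2.1 α hα β hβ, rfl⟩, ?_, ?_⟩ <;>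
      rw [fg_add_val]
    · exact le_sup_left
    · exact le_sup_right
  rw [toIdeal, Submodule.mem_sSup_of_directed hne hdir]
  constructor
  · rintro ⟨J, ⟨α, hα, rfl⟩, hx⟩; exact ⟨α, hα, hx⟩
  · rintro ⟨α, hα, hx⟩; exact ⟨α.1, ⟨α, hα, rfl⟩, hx⟩

lemma eq_SJ {I : Set (FGIdeal R)} (hI : IsKIdeal I) : I = SJ (toIdeal I) := by
  apply subset_antisymm
  · intro α hα
    show α.1 ≤ toIdeal I
    exact le_sSup (Set.mem_image_of_mem _ hα)
  · intro α hα
    obtain ⟨s, hs⟩ := α.2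
    obtain ⟨β, hβ, hle⟩ := exists_mem_span_le hI s (fun x hx => by
      have hx' : x ∈ toIdeal I := hα (hs ▸ Ideal.subset_span hx)
      obtain ⟨γ, hγ, hxγ⟩ := (mem_toIdeal hI).1 hx'
      exact uRfg_mem hI hγ hxγ)
    exact mem_of_le hI hβ (hs ▸ hle)

lemma SJ_subset_iff {J P : Ideal R} : SJ J ⊆ SJ P ↔ J ≤ P := by
  constructor
  · intro h x hx
    exact h (show (uRfg x).1 ≤ J from (Ideal.span_singleton_le_iff_mem _).2 hx)
      (Ideal.mem_span_singleton_self x)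
  · intro h α hα
    exact hα.trans h

lemma uRtilde_eq_SJ (J : Ideal R) : uRtilde J = SJ J := by
  apply subset_antisymm
  · apply Set.sInter_subset_of_mem
    refine ⟨isKIdeal_SJ J, ?_⟩
    rintro _ ⟨x, hx, rfl⟩
    exact (Ideal.span_singleton_le_iff_mem _).2 hx
  · rintro α hα K ⟨hK, hKsub⟩
    obtain ⟨s, hs⟩ := α.2
    obtain ⟨β, hβ, hle⟩ := exists_mem_span_le hK s (fun x hx =>
      hKsub ⟨x, hα (hs ▸ Ideal.subset_span hx), rfl⟩)
    exact mem_of_le hK hβ (hs ▸ hle)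

lemma isPrimeSet_SJ_iff {P : Ideal R} : IsPrimeSet (SJ P) ↔ P.IsPrime := by
  constructor
  · rintro ⟨h1, h2⟩
    constructor
    · intro hP
      exact h1 (show (1 : Ideal R) ≤ P by rw [hP]; exact le_top)
    · intro a b hab
      have hmul : (uRfg a * uRfg b : FGIdeal R) ∈ SJ P := by
        show Ideal.span {a} * Ideal.span {b} ≤ P
        rw [Ideal.span_singleton_mul_span_singleton]
        exact (Ideal.span_singleton_le_iff_mem _).2 hab
      rcases h2 _ _ hmul with h | h
      · exact Or.inl (h (Ideal.mem_span_singleton_self a))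
      · exact Or.inr (h (Ideal.mem_span_singleton_self b))
  · intro hP
    refine ⟨fun h => ?_, fun a b hab => ?_⟩
    · have h' : (1 : Ideal R) ≤ P := h
      rw [Ideal.one_eq_top] at h'
      exact hP.ne_top (top_le_iff.1 h')
    exact (Ideal.IsPrime.mul_le hP).1 hab

lemma fg_pow_val (α : FGIdeal R) (n : ℕ) : (α ^ n).1 = α.1 ^ n := rfl

lemma sqrtK_SJ (J : Ideal R) : sqrtK (SJ J) = SJ J.radical := by
  ext α
  constructor
  · rintro ⟨n, hn, h⟩
    intro x hx
    exact ⟨n, h (show x ^ n ∈ α.1 ^ n from Ideal.pow_mem_pow hx n)⟩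
  · intro h
    obtain ⟨n, hn⟩ := Ideal.exists_pow_le_of_le_radical_of_fg h α.2
    refine ⟨n + 1, Nat.le_add_left 1 n, ?_⟩
    show (α ^ (n + 1)).1 ≤ J
    rw [fg_pow_val, pow_succ]
    exact Ideal.mul_le_left.trans hn

end FGIdealAux

/-- For a proper subtractive ideal `I` of `fgId(R)`, the radical `√I`
is a subtractive ideal equal to the intersection of the prime subtractive ideals
containing `I`; moreover the bijection `ũ : Id(R) → Id_k(fgId(R))` preserves radicals:
`ũ(rad J) = √(ũ J)` for every proper ideal `J` of `R`, and in particular `ũ` maps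
radical ideals to radical subtractive ideals. -/

theorem radical_of_kIdeal_and_uRtilde_preserves_radicals (R : Type*) [CommRing R] :
    (∀ I : Set (FGIdeal R), IsKIdeal I → I ≠ Set.univ →
      IsKIdeal (sqrtK I) ∧
        sqrtK I = ⋂₀ {p : Set (FGIdeal R) | (IsKIdeal p ∧ IsPrimeSet p) ∧ I ⊆ p}) ∧
    (∀ J : Ideal R, J ≠ ⊤ → uRtilde J.radical = sqrtK (uRtilde J)) ∧
    (∀ J : Ideal R, J ≠ ⊤ → J.radical = J → sqrtK (uRtilde J) = uRtilde J) := by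
  classical
  refine ⟨?_, ?_, ?_⟩
  · intro I hI _
    have hIeq := FGIdealAux.eq_SJ hI
    rw [hIeq, FGIdealAux.sqrtK_SJ]
    refine ⟨FGIdealAux.isKIdeal_SJ _, ?_⟩
    apply subset_antisymm
    · rintro α hα p ⟨⟨hpk, hpp⟩, hIp⟩
      have hpeq := FGIdealAux.eq_SJ hpk
      rw [hpeq] at hpp hIp ⊢
      have hPprime : (FGIdealAux.toIdeal p).IsPrime := FGIdealAux.isPrimeSet_SJ_iff.1 hpp
      have hJP : FGIdealAux.toIdeal I ≤ FGIdealAux.toIdeal p :=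
        FGIdealAux.SJ_subset_iff.1 hIp
      exact (FGIdealAux.SJ_subset_iff.2 (hPprime.radical_le_iff.2 hJP)) hα
    · intro α hα
      show α.1 ≤ (FGIdealAux.toIdeal I).radical
      rw [Ideal.radical_eq_sInf]
      refine le_sInf ?_
      rintro P ⟨hJP, hP⟩
      exact hα (FGIdealAux.SJ P)
        ⟨⟨FGIdealAux.isKIdeal_SJ P, FGIdealAux.isPrimeSet_SJ_iff.2 hP⟩,
          FGIdealAux.SJ_subset_iff.2 hJP⟩
  · intro J _
    rw [FGIdealAux.uRtilde_eq_SJ, FGIdealAux.uRtilde_eq_SJ, FGIdealAux.sqrtK_SJ]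
  · intro J _ hrad
    rw [FGIdealAux.uRtilde_eq_SJ, FGIdealAux.sqrtK_SJ, hrad]
end
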